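/- arXiv:1712.09564 — 2 statements merged into one kernel-verified Lean document; each statement's English description precedes it below -/
import Mathlib

section
/- Theorem 2 (characterization of the variant A² of the q-Heun equation). Let a(x) = ∏_{n=1}^{4}(x − q^{h_n+1/2} t_n), c(x) = ∏_{n=1}^{4}(x − q^{l_n−1/2} t_n), and b(x) = b4 x⁴ + b3 x³ + E x² + b1 x + b0 with b4, b3, b1, b0, E ∈ ℂ; denote by a3, c3 the coefficients of x³ and by a1, c1 the coefficients of x¹ in a(x) and c(x) respectively. Assume: (i) there exists a real number λ such that q^{−λ} a(0) + b0 + q^{λ} c(0) = 0 and q^{−λ−1} a(0) + b0 + q^{λ+1} c(0) = 0 (the exponents at x = 0 differ by 1); (ii) for λ as in (i), q^{−λ} a1 + b1 + q^{λ} c1 = 0 (the regular singularity x = 0 is apparent); (iii) there exists a real number μ such that q^{μ} + b4 + q^{−μ} = 0 and q^{μ+1} + b4 + q^{−μ−1} = 0 (the exponents at x = ∞ differ by 1); (iv) for μ as in (iii), q^{μ} a3 + b3 + q^{−μ} c3 = 0 (the regular singularity x = ∞ is apparent). Then b4 = −(q^{1/2} + q^{−1/2}), b3 = Σ_{n=1}^{4}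 (q^{h_n} + q^{l_n}) t_n, b1 = q^{(h1+h2+h3+h4+l1+l2+l3+l4)/2} t1 t2 t3 t4 Σ_{n=1}^{4} (q^{−h_n} + q^{−l_n}) t_n^{−1}, and b0 = −q^{(h1+h2+h3+h4+l1+l2+l3+l4)/2} (q^{1/2} + q^{−1/2}) t1 t2 t3 t4; that is, the equation is the variant of the q-Heun equation (A² − E)g = 0. -/
noncomputable def qp (q r : ℝ) : ℂ := ((q ^ r : ℝ) : ℂ)

lemma qp_mul {q : ℝ} (hq : 0 < q) (r s : ℝ) : qp q r * qp q s = qp q (r + s) := by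
  unfold qp; rw [← Complex.ofReal_mul, ← Real.rpow_add hq]

lemma qpm2 {q : ℝ} (hq : 0 < q) {r1 r2 s : ℝ} (h : r1 + r2 = s) :
    qp q r1 * qp q r2 = qp q s := by rw [qp_mul hq, h]

lemma qpm3 {q : ℝ} (hq : 0 < q) {r1 r2 r3 s : ℝ} (h : r1 + r2 + r3 = s) :
    qp q r1 * qp q r2 * qp q r3 = qp q s := by rw [qp_mul hq, qp_mul hq, h]

lemma qpm4 {q : ℝ} (hq : 0 < q) {r1 r2 r3 r4 s : ℝ} (h : r1 + r2 + r3 + r4 = s) :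
    qp q r1 * qp q r2 * qp q r3 * qp q r4 = qp q s := by
  rw [qp_mul hq, qp_mul hq, qp_mul hq, h]

lemma qp_one (q : ℝ) : qp q 1 = (q : ℂ) := by unfold qp; rw [Real.rpow_one]

lemma qp_ne_zero {q : ℝ} (hq : 0 < q) (r : ℝ) : qp q r ≠ 0 := by
  unfold qp; exact_mod_cast (Real.rpow_pos_of_pos hq r).ne'

lemma qp_inj {q : ℝ} (hq : 0 < q) (hq1 : q ≠ 1) {r s : ℝ} (h : qp q r = qp q s) : r = s := by
  unfold qp at h
  have h' : (q : ℝ) ^ r = q ^ s := by exact_mod_cast h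
  have hlog : Real.log q ≠ 0 := Real.log_ne_zero_of_pos_of_ne_one hq hq1
  have h2 := congrArg Real.log h'
  rw [Real.log_rpow hq, Real.log_rpow hq] at h2
  exact mul_right_cancel₀ hlog h2

open Polynomial in
lemma quartic_expand (r1 r2 r3 r4 : ℂ) :
    (X - C r1) * (X - C r2) * (X - C r3) * (X - C r4)
      = X ^ 4 - C (r1 + r2 + r3 + r4) * X ^ 3
        + C (r1*r2 + r1*r3 + r1*r4 + r2*r3 + r2*r4 + r3*r4) * X ^ 2
        - C (r1*r2*r3 + r1*r2*r4 + r1*r3*r4 + r2*r3*r4) * X + C (r1*r2*r3*r4) := by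
  simp only [C_add, C_mul]; ring

open Polynomial in
lemma coeff3_of (r1 r2 r3 r4 : ℂ) :
    ((X - C r1) * (X - C r2) * (X - C r3) * (X - C r4)).coeff 3 = -(r1 + r2 + r3 + r4) := by
  rw [quartic_expand]
  simp only [coeff_add, coeff_sub, coeff_C_mul, coeff_X_pow, coeff_C, coeff_X]
  norm_num

open Polynomial in
lemma coeff1_of (r1 r2 r3 r4 : ℂ) :
    ((X - C r1) * (X - C r2) * (X - C r3) * (X - C r4)).coeff 1
      = -(r1*r2*r3 + r1*r2*r4 + r1*r3*r4 + r2*r3*r4) := by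
  rw [quartic_expand]
  simp only [coeff_add, coeff_sub, coeff_C_mul, coeff_X_pow, coeff_C, coeff_X]
  norm_num

open Polynomial in
lemma eval0_of (r1 r2 r3 r4 : ℂ) :
    ((X - C r1) * (X - C r2) * (X - C r3) * (X - C r4)).eval 0 = r1*r2*r3*r4 := by
  simp


open Polynomial in
theorem stmt10 (q h1 h2 h3 h4 l1 l2 l3 l4 : ℝ) (hq : 0 < q) (hq1 : q ≠ 1)
    (t1 t2 t3 t4 : ℝ) (ht1 : t1 ≠ 0) (ht2 : t2 ≠ 0) (ht3 : t3 ≠ 0) (ht4 : t4 ≠ 0)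
    (b4 b3 b1 b0 E : ℂ) (a c : Polynomial ℂ)
    (ha : a = (X - C (qp q (h1 + 1/2) * (t1 : ℂ))) * (X - C (qp q (h2 + 1/2) * (t2 : ℂ)))
        * (X - C (qp q (h3 + 1/2) * (t3 : ℂ))) * (X - C (qp q (h4 + 1/2) * (t4 : ℂ))))
    (hc : c = (X - C (qp q (l1 - 1/2) * (t1 : ℂ))) * (X - C (qp q (l2 - 1/2) * (t2 : ℂ)))
        * (X - C (qp q (l3 - 1/2) * (t3 : ℂ))) * (X - C (qp q (l4 - 1/2) * (t4 : ℂ))))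
    (hzero : ∃ lam : ℝ,
        (qp q (-lam) * a.eval 0 + b0 + qp q lam * c.eval 0 = 0 ∧
          qp q (-(lam + 1)) * a.eval 0 + b0 + qp q (lam + 1) * c.eval 0 = 0) ∧
        qp q (-lam) * a.coeff 1 + b1 + qp q lam * c.coeff 1 = 0)
    (hinf : ∃ μ : ℝ,
        (qp q μ + b4 + qp q (-μ) = 0 ∧ qp q (μ + 1) + b4 + qp q (-(μ + 1)) = 0) ∧
        qp q μ * a.coeff 3 + b3 + qp q (-μ) * c.coeff 3 = 0) :
    b4 = -(qp q (1/2) + qp q (-(1/2))) ∧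
    b3 = (qp q h1 + qp q l1) * (t1 : ℂ) + (qp q h2 + qp q l2) * (t2 : ℂ)
        + (qp q h3 + qp q l3) * (t3 : ℂ) + (qp q h4 + qp q l4) * (t4 : ℂ) ∧
    b1 = qp q ((h1 + h2 + h3 + h4 + l1 + l2 + l3 + l4) / 2) * (t1 : ℂ) * (t2 : ℂ) * (t3 : ℂ)
        * (t4 : ℂ) * ((qp q (-h1) + qp q (-l1)) * (t1 : ℂ)⁻¹ + (qp q (-h2) + qp q (-l2)) * (t2 : ℂ)⁻¹
            + (qp q (-h3) + qp q (-l3)) * (t3 : ℂ)⁻¹ + (qp q (-h4) + qp q (-l4)) * (t4 : ℂ)⁻¹) ∧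
    b0 = -(qp q ((h1 + h2 + h3 + h4 + l1 + l2 + l3 + l4) / 2) * (qp q (1/2) + qp q (-(1/2)))
        * (t1 : ℂ) * (t2 : ℂ) * (t3 : ℂ) * (t4 : ℂ)) := by
  obtain ⟨lam, ⟨hz1, hz2⟩, hB1⟩ := hzero
  obtain ⟨μ, ⟨hm1, hm2⟩, hB3⟩ := hinf
  have hq1' : (q : ℂ) ≠ 1 := by exact_mod_cast hq1
  have hqsub : (q : ℂ) - 1 ≠ 0 := sub_ne_zero.mpr hq1'
  have ht1' : (t1 : ℂ) ≠ 0 := by exact_mod_cast ht1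
  have ht2' : (t2 : ℂ) ≠ 0 := by exact_mod_cast ht2
  have ht3' : (t3 : ℂ) ≠ 0 := by exact_mod_cast ht3
  have ht4' : (t4 : ℂ) ≠ 0 := by exact_mod_cast ht4
  have hTne : (t1 : ℂ) * t2 * t3 * t4 ≠ 0 :=
    mul_ne_zero (mul_ne_zero (mul_ne_zero ht1' ht2') ht3') ht4'
  -- coefficient computations
  have hA0 : a.eval 0 = qp q (h1+h2+h3+h4+2) * ((t1:ℂ) * t2 * t3 * t4) := by
    rw [ha, eval0_of]
    have h4' := qpm4 hq (show (h1+1/2)+(h2+1/2)+(h3+1/2)+(h4+1/2) = h1+h2+h3+h4+2 by ring)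
    linear_combination ((t1:ℂ) * t2 * t3 * t4) * h4'
  have hC0 : c.eval 0 = qp q (l1+l2+l3+l4-2) * ((t1:ℂ) * t2 * t3 * t4) := by
    rw [hc, eval0_of]
    have h4' := qpm4 hq (show (l1-1/2)+(l2-1/2)+(l3-1/2)+(l4-1/2) = l1+l2+l3+l4-2 by ring)
    linear_combination ((t1:ℂ) * t2 * t3 * t4) * h4'
  have hA3 : a.coeff 3 = -(qp q (h1+1/2) * t1 + qp q (h2+1/2) * t2 + qp q (h3+1/2) * t3
      + qp q (h4+1/2) * t4) := by rw [ha, coeff3_of]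
  have hC3 : c.coeff 3 = -(qp q (l1-1/2) * t1 + qp q (l2-1/2) * t2 + qp q (l3-1/2) * t3
      + qp q (l4-1/2) * t4) := by rw [hc, coeff3_of]
  have hA1 : a.coeff 1 = -(qp q (h1+h2+h3+3/2) * ((t1:ℂ)*t2*t3)
      + qp q (h1+h2+h4+3/2) * ((t1:ℂ)*t2*t4) + qp q (h1+h3+h4+3/2) * ((t1:ℂ)*t3*t4)
      + qp q (h2+h3+h4+3/2) * ((t2:ℂ)*t3*t4)) := by
    rw [ha, coeff1_of]
    have p1 := qpm3 hq (show (h1+1/2)+(h2+1/2)+(h3+1/2) = h1+h2+h3+3/2 by ring)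
    have p2 := qpm3 hq (show (h1+1/2)+(h2+1/2)+(h4+1/2) = h1+h2+h4+3/2 by ring)
    have p3 := qpm3 hq (show (h1+1/2)+(h3+1/2)+(h4+1/2) = h1+h3+h4+3/2 by ring)
    have p4 := qpm3 hq (show (h2+1/2)+(h3+1/2)+(h4+1/2) = h2+h3+h4+3/2 by ring)
    linear_combination (-(t1:ℂ)*t2*t3) * p1 + (-(t1:ℂ)*t2*t4) * p2 + (-(t1:ℂ)*t3*t4) * p3
      + (-(t2:ℂ)*t3*t4) * p4
  have hC1 : c.coeff 1 = -(qp q (l1+l2+l3-3/2) * ((t1:ℂ)*t2*t3)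
      + qp q (l1+l2+l4-3/2) * ((t1:ℂ)*t2*t4) + qp q (l1+l3+l4-3/2) * ((t1:ℂ)*t3*t4)
      + qp q (l2+l3+l4-3/2) * ((t2:ℂ)*t3*t4)) := by
    rw [hc, coeff1_of]
    have p1 := qpm3 hq (show (l1-1/2)+(l2-1/2)+(l3-1/2) = l1+l2+l3-3/2 by ring)
    have p2 := qpm3 hq (show (l1-1/2)+(l2-1/2)+(l4-1/2) = l1+l2+l4-3/2 by ring)
    have p3 := qpm3 hq (show (l1-1/2)+(l3-1/2)+(l4-1/2) = l1+l3+l4-3/2 by ring)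
    have p4 := qpm3 hq (show (l2-1/2)+(l3-1/2)+(l4-1/2) = l2+l3+l4-3/2 by ring)
    linear_combination (-(t1:ℂ)*t2*t3) * p1 + (-(t1:ℂ)*t2*t4) * p2 + (-(t1:ℂ)*t3*t4) * p3
      + (-(t2:ℂ)*t3*t4) * p4
  -- determine μ
  have rμ1 : qp q (-μ) = qp q (-(μ + 1)) * (q:ℂ) := by
    have h := qpm2 hq (show -(μ+1) + 1 = -μ by ring)
    rw [qp_one] at h; exact h.symm
  have rμ2 : qp q (μ + 1) = qp q μ * (q:ℂ) := by
    have h := qpm2 hq (show μ + 1 = μ + 1 by ring)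
    rw [qp_one] at h; exact h.symm
  have hfac : (qp q μ - qp q (-(μ + 1))) * ((q:ℂ) - 1) = 0 := by
    linear_combination hm2 - hm1 - rμ2 + rμ1
  have hμeq : qp q μ = qp q (-(μ + 1)) :=
    sub_eq_zero.mp ((mul_eq_zero.mp hfac).resolve_right hqsub)
  have hμv : μ = -(1/2 : ℝ) := by
    have := qp_inj hq hq1 hμeq; linarith
  subst hμv
  rw [show (-(-(1/2)) : ℝ) = 1/2 by norm_num] at hm1 hB3
  -- determine lam
  rw [hA0, hC0] at hz1 hz2
  have rlam1 : qp q (-lam) = qp q (-(lam + 1)) * (q:ℂ) := by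
    have h := qpm2 hq (show -(lam+1) + 1 = -lam by ring)
    rw [qp_one] at h; exact h.symm
  have rlam2 : qp q (lam + 1) = qp q lam * (q:ℂ) := by
    have h := qpm2 hq (show lam + 1 = lam + 1 by ring)
    rw [qp_one] at h; exact h.symm
  have hfac2 : (qp q (-(lam + 1)) * qp q (h1+h2+h3+h4+2) - qp q lam * qp q (l1+l2+l3+l4-2))
      * ((q:ℂ) - 1) * ((t1:ℂ) * t2 * t3 * t4) = 0 := by
    linear_combination hz1 - hz2
      - (qp q (h1+h2+h3+h4+2) * ((t1:ℂ) * t2 * t3 * t4)) * rlam1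
      + (qp q (l1+l2+l3+l4-2) * ((t1:ℂ) * t2 * t3 * t4)) * rlam2
  have hzz : qp q (-(lam + 1)) * qp q (h1+h2+h3+h4+2) = qp q lam * qp q (l1+l2+l3+l4-2) :=
    sub_eq_zero.mp (((mul_eq_zero.mp ((mul_eq_zero.mp hfac2).resolve_right hTne)).resolve_right
      hqsub))
  rw [qp_mul hq, qp_mul hq] at hzz
  have hlamv : lam = (h1 + h2 + h3 + h4 - (l1 + l2 + l3 + l4) + 3) / 2 := by
    have := qp_inj hq hq1 hzz; linarith
  subst hlamv
  refine ⟨by linear_combination hm1, ?_, ?_, ?_⟩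
  · -- b3
    rw [hA3, hC3] at hB3
    have fh1 := qpm2 hq (show -(1/2) + (h1+1/2) = h1 by ring)
    have fh2 := qpm2 hq (show -(1/2) + (h2+1/2) = h2 by ring)
    have fh3 := qpm2 hq (show -(1/2) + (h3+1/2) = h3 by ring)
    have fh4 := qpm2 hq (show -(1/2) + (h4+1/2) = h4 by ring)
    have fl1 := qpm2 hq (show (1/2) + (l1-1/2) = l1 by ring)
    have fl2 := qpm2 hq (show (1/2) + (l2-1/2) = l2 by ring)
    have fl3 := qpm2 hq (show (1/2) + (l3-1/2) = l3 by ring)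
    have fl4 := qpm2 hq (show (1/2) + (l4-1/2) = l4 by ring)
    linear_combination hB3 + (t1:ℂ) * fh1 + (t2:ℂ) * fh2 + (t3:ℂ) * fh3 + (t4:ℂ) * fh4
      + (t1:ℂ) * fl1 + (t2:ℂ) * fl2 + (t3:ℂ) * fl3 + (t4:ℂ) * fl4
  · -- b1
    rw [hA1, hC1] at hB1
    have k1 : qp q (-((h1 + h2 + h3 + h4 - (l1 + l2 + l3 + l4) + 3) / 2)) * qp q (h2+h3+h4+3/2)
        = qp q ((h1 + h2 + h3 + h4 + l1 + l2 + l3 + l4) / 2) * qp q (-h1) := by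
      rw [qp_mul hq, qp_mul hq]; congr 1; ring
    have k2 : qp q (-((h1 + h2 + h3 + h4 - (l1 + l2 + l3 + l4) + 3) / 2)) * qp q (h1+h3+h4+3/2)
        = qp q ((h1 + h2 + h3 + h4 + l1 + l2 + l3 + l4) / 2) * qp q (-h2) := by
      rw [qp_mul hq, qp_mul hq]; congr 1; ring
    have k3 : qp q (-((h1 + h2 + h3 + h4 - (l1 + l2 + l3 + l4) + 3) / 2)) * qp q (h1+h2+h4+3/2)
        = qp q ((h1 + h2 + h3 + h4 + l1 + l2 + l3 + l4) / 2) * qp q (-h3) := by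
      rw [qp_mul hq, qp_mul hq]; congr 1; ring
    have k4 : qp q (-((h1 + h2 + h3 + h4 - (l1 + l2 + l3 + l4) + 3) / 2)) * qp q (h1+h2+h3+3/2)
        = qp q ((h1 + h2 + h3 + h4 + l1 + l2 + l3 + l4) / 2) * qp q (-h4) := by
      rw [qp_mul hq, qp_mul hq]; congr 1; ring
    have m1 : qp q ((h1 + h2 + h3 + h4 - (l1 + l2 + l3 + l4) + 3) / 2) * qp q (l2+l3+l4-3/2)
        = qp q ((h1 + h2 + h3 + h4 + l1 + l2 + l3 + l4) / 2) * qp q (-l1) := by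
      rw [qp_mul hq, qp_mul hq]; congr 1; ring
    have m2 : qp q ((h1 + h2 + h3 + h4 - (l1 + l2 + l3 + l4) + 3) / 2) * qp q (l1+l3+l4-3/2)
        = qp q ((h1 + h2 + h3 + h4 + l1 + l2 + l3 + l4) / 2) * qp q (-l2) := by
      rw [qp_mul hq, qp_mul hq]; congr 1; ring
    have m3 : qp q ((h1 + h2 + h3 + h4 - (l1 + l2 + l3 + l4) + 3) / 2) * qp q (l1+l2+l4-3/2)
        = qp q ((h1 + h2 + h3 + h4 + l1 + l2 + l3 + l4) / 2) * qp q (-l3) := by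
      rw [qp_mul hq, qp_mul hq]; congr 1; ring
    have m4 : qp q ((h1 + h2 + h3 + h4 - (l1 + l2 + l3 + l4) + 3) / 2) * qp q (l1+l2+l3-3/2)
        = qp q ((h1 + h2 + h3 + h4 + l1 + l2 + l3 + l4) / 2) * qp q (-l4) := by
      rw [qp_mul hq, qp_mul hq]; congr 1; ring
    have i1 : (t1:ℂ) * (t1:ℂ)⁻¹ = 1 := mul_inv_cancel₀ ht1'
    have i2 : (t2:ℂ) * (t2:ℂ)⁻¹ = 1 := mul_inv_cancel₀ ht2'
    have i3 : (t3:ℂ) * (t3:ℂ)⁻¹ = 1 := mul_inv_cancel₀ ht3'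
    have i4 : (t4:ℂ) * (t4:ℂ)⁻¹ = 1 := mul_inv_cancel₀ ht4'
    linear_combination hB1
      + ((t2:ℂ)*t3*t4) * k1 + ((t1:ℂ)*t3*t4) * k2 + ((t1:ℂ)*t2*t4) * k3 + ((t1:ℂ)*t2*t3) * k4
      + ((t2:ℂ)*t3*t4) * m1 + ((t1:ℂ)*t3*t4) * m2 + ((t1:ℂ)*t2*t4) * m3 + ((t1:ℂ)*t2*t3) * m4
      - (qp q ((h1 + h2 + h3 + h4 + l1 + l2 + l3 + l4) / 2) * (qp q (-h1) + qp q (-l1)) * ((t2:ℂ)*t3*t4)) * i1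
      - (qp q ((h1 + h2 + h3 + h4 + l1 + l2 + l3 + l4) / 2) * (qp q (-h2) + qp q (-l2)) * ((t1:ℂ)*t3*t4)) * i2
      - (qp q ((h1 + h2 + h3 + h4 + l1 + l2 + l3 + l4) / 2) * (qp q (-h3) + qp q (-l3)) * ((t1:ℂ)*t2*t4)) * i3
      - (qp q ((h1 + h2 + h3 + h4 + l1 + l2 + l3 + l4) / 2) * (qp q (-h4) + qp q (-l4)) * ((t1:ℂ)*t2*t3)) * i4
  · -- b0
    have g1 : qp q (-((h1 + h2 + h3 + h4 - (l1 + l2 + l3 + l4) + 3) / 2)) * qp q (h1+h2+h3+h4+2)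
        = qp q ((h1 + h2 + h3 + h4 + l1 + l2 + l3 + l4) / 2) * qp q (1/2) := by
      rw [qp_mul hq, qp_mul hq]; congr 1; ring
    have g2 : qp q ((h1 + h2 + h3 + h4 - (l1 + l2 + l3 + l4) + 3) / 2) * qp q (l1+l2+l3+l4-2)
        = qp q ((h1 + h2 + h3 + h4 + l1 + l2 + l3 + l4) / 2) * qp q (-(1/2)) := by
      rw [qp_mul hq, qp_mul hq]; congr 1; ring
    linear_combination hz1 - ((t1:ℂ) * t2 * t3 * t4) * g1 - ((t1:ℂ) * t2 * t3 * t4) * g2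
end

section
/- Set λ1 = (h1+h2+h3−l1−l2−l3−β+3)/2 and λ2 = (h1+h2+h3−l1−l2−l3+β+3)/2. Let λ ∈ {λ1, λ2} and assume n := −λ+1/2 is a non-negative integer. Let V³ be the complex vector space of functions on (0,∞) spanned by the monomials x ↦ x^{λ+k} for k = 0, 1, …, n (the top monomial being x^{1/2}). Then the operator A³ preserves V³, i.e., A³ g ∈ V³ for every g ∈ V³. -/
noncomputable def A3 (q h1 h2 h3 l1 l2 l3 b : ℝ) (t1 t2 t3 : ℂ) (g : ℝ → ℂ) (x : ℝ) : ℂ :=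
  (x : ℂ)⁻¹ * ((x : ℂ) - qp q (h1 + 1/2) * t1) * ((x : ℂ) - qp q (h2 + 1/2) * t2)
      * ((x : ℂ) - qp q (h3 + 1/2) * t3) * g (x / q)
    + (x : ℂ)⁻¹ * ((x : ℂ) - qp q (l1 - 1/2) * t1) * ((x : ℂ) - qp q (l2 - 1/2) * t2)
      * ((x : ℂ) - qp q (l3 - 1/2) * t3) * g (q * x)
    + (-(qp q (1/2) + qp q (-(1/2))) * (x : ℂ) ^ 2
        + ((qp q h1 + qp q l1) * t1 + (qp q h2 + qp q l2) * t2 + (qp q h3 + qp q l3) * t3) * (x : ℂ)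
        + qp q ((h1 + h2 + h3 + l1 + l2 + l3) / 2) * (qp q (b / 2) + qp q (-b / 2))
          * t1 * t2 * t3 * (x : ℂ)⁻¹) * g x

lemma qp_add (q : ℝ) (hq : 0 < q) (a b : ℝ) : qp q (a + b) = qp q a * qp q b := by
  simp [qp, Real.rpow_add hq]

lemma qp_neg (q : ℝ) (hq : 0 < q) (r : ℝ) : qp q (-r) = (qp q r)⁻¹ := by
  simp [qp, Real.rpow_neg hq.le]

lemma qp_ne (q : ℝ) (hq : 0 < q) (r : ℝ) : qp q r ≠ 0 := by
  simp only [qp, ne_eq, Complex.ofReal_eq_zero]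
  exact (Real.rpow_pos_of_pos hq r).ne'

lemma A3_mono (q h1 h2 h3 l1 l2 l3 b : ℝ) (hq : 0 < q) (t1 t2 t3 : ℂ) (μ : ℝ)
    (x : ℝ) (hx : 0 < x) :
    A3 q h1 h2 h3 l1 l2 l3 b t1 t2 t3 (fun y => ((y ^ μ : ℝ) : ℂ)) x =
      (qp q (-μ) + qp q μ - qp q (1/2) - qp q (-(1/2))) * ((x ^ (μ + 2) : ℝ) : ℂ)
      + (((qp q h1 + qp q l1) * t1 + (qp q h2 + qp q l2) * t2 + (qp q h3 + qp q l3) * t3)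
          - (qp q (h1 + 1/2) * t1 + qp q (h2 + 1/2) * t2 + qp q (h3 + 1/2) * t3) * qp q (-μ)
          - (qp q (l1 - 1/2) * t1 + qp q (l2 - 1/2) * t2 + qp q (l3 - 1/2) * t3) * qp q μ)
        * ((x ^ (μ + 1) : ℝ) : ℂ)
      + ((qp q (h1 + 1/2) * qp q (h2 + 1/2) * t1 * t2 + qp q (h1 + 1/2) * qp q (h3 + 1/2) * t1 * t3
            + qp q (h2 + 1/2) * qp q (h3 + 1/2) * t2 * t3) * qp q (-μ)
          + (qp q (l1 - 1/2) * qp q (l2 - 1/2) * t1 * t2 + qp q (l1 - 1/2) * qp q (l3 - 1/2) * t1 * t3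
            + qp q (l2 - 1/2) * qp q (l3 - 1/2) * t2 * t3) * qp q μ)
        * ((x ^ μ : ℝ) : ℂ)
      + (qp q ((h1 + h2 + h3 + l1 + l2 + l3) / 2) * (qp q (b / 2) + qp q (-b / 2)) * t1 * t2 * t3
          - qp q (h1 + 1/2) * qp q (h2 + 1/2) * qp q (h3 + 1/2) * t1 * t2 * t3 * qp q (-μ)
          - qp q (l1 - 1/2) * qp q (l2 - 1/2) * qp q (l3 - 1/2) * t1 * t2 * t3 * qp q μ)
        * ((x ^ (μ - 1) : ℝ) : ℂ) := by
  have hX : (x : ℂ) ≠ 0 := by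
    simpa using hx.ne'
  have hQR : (0:ℝ) < q ^ μ := Real.rpow_pos_of_pos hq μ
  have hQ : ((q ^ μ : ℝ) : ℂ) ≠ 0 := by
    simpa using hQR.ne'
  have e1 : ((x / q) ^ μ : ℝ) = x ^ μ * (q ^ μ)⁻¹ := by
    rw [Real.div_rpow hx.le hq.le, div_eq_mul_inv]
  have e2 : ((q * x) ^ μ : ℝ) = q ^ μ * x ^ μ := Real.mul_rpow hq.le hx.le
  have e3 : (x ^ (μ + 2) : ℝ) = x ^ μ * (x * x) := by
    rw [Real.rpow_add hx, show (2:ℝ) = ((2:ℕ):ℝ) by norm_num, Real.rpow_natCast]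
    ring
  have e4 : (x ^ (μ + 1) : ℝ) = x ^ μ * x := by
    rw [Real.rpow_add hx, Real.rpow_one]
  have e5 : (x ^ (μ - 1) : ℝ) = x ^ μ * x⁻¹ := by
    rw [Real.rpow_sub hx, Real.rpow_one, div_eq_mul_inv]
  have e6 : qp q (-μ) = ((q ^ μ : ℝ) : ℂ)⁻¹ := by
    rw [qp_neg q hq μ]; rfl
  have e7 : qp q μ = ((q ^ μ : ℝ) : ℂ) := rfl
  simp only [A3, e1, e2, e3, e4, e5, e6, e7]
  push_cast
  field_simp
  ring

lemma Z2 (q : ℝ) (μ : ℝ) (h : μ = 1/2 ∨ μ = -(1/2)) :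
    qp q (-μ) + qp q μ - qp q (1/2) - qp q (-(1/2)) = 0 := by
  rcases h with rfl | rfl
  · ring
  · rw [neg_neg]; ring

lemma Z1 (q h1 h2 h3 l1 l2 l3 : ℝ) (hq : 0 < q) (t1 t2 t3 : ℂ) :
    ((qp q h1 + qp q l1) * t1 + (qp q h2 + qp q l2) * t2 + (qp q h3 + qp q l3) * t3)
      - (qp q (h1 + 1/2) * t1 + qp q (h2 + 1/2) * t2 + qp q (h3 + 1/2) * t3) * qp q (-(1/2))
      - (qp q (l1 - 1/2) * t1 + qp q (l2 - 1/2) * t2 + qp q (l3 - 1/2) * t3) * qp q (1/2) = 0 := by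
  have hP : qp q (1/2) ≠ 0 := qp_ne q hq _
  have d1 : ∀ a : ℝ, qp q (a + 1/2) = qp q a * qp q (1/2) := fun a => qp_add q hq a (1/2)
  have d2 : ∀ a : ℝ, qp q (a - 1/2) = qp q a * (qp q (1/2))⁻¹ := fun a => by
    rw [sub_eq_add_neg, qp_add q hq, qp_neg q hq]
  rw [d1, d1, d1, d2, d2, d2, qp_neg q hq]
  field_simp
  ring

lemma Zm (q h1 h2 h3 l1 l2 l3 β lam : ℝ) (hq : 0 < q) (t1 t2 t3 : ℂ)
    (hlam : lam = (h1 + h2 + h3 - l1 - l2 - l3 - β + 3) / 2 ∨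
      lam = (h1 + h2 + h3 - l1 - l2 - l3 + β + 3) / 2) :
    qp q ((h1 + h2 + h3 + l1 + l2 + l3) / 2) * (qp q (β / 2) + qp q (-β / 2)) * t1 * t2 * t3
      - qp q (h1 + 1/2) * qp q (h2 + 1/2) * qp q (h3 + 1/2) * t1 * t2 * t3 * qp q (-lam)
      - qp q (l1 - 1/2) * qp q (l2 - 1/2) * qp q (l3 - 1/2) * t1 * t2 * t3 * qp q lam = 0 := by
  have col : ∀ a b : ℝ, qp q a * qp q b = qp q (a + b) := fun a b => (qp_add q hq a b).symm
  have eA : qp q (h1 + 1/2) * qp q (h2 + 1/2) * qp q (h3 + 1/2) * qp q (-lam)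
      = qp q (h1 + h2 + h3 + 3/2 - lam) := by
    rw [col, col, col]; congr 1; ring
  have eB : qp q (l1 - 1/2) * qp q (l2 - 1/2) * qp q (l3 - 1/2) * qp q lam
      = qp q (l1 + l2 + l3 - 3/2 + lam) := by
    rw [col, col, col]; congr 1; ring
  have eC : qp q ((h1 + h2 + h3 + l1 + l2 + l3) / 2) * qp q (β / 2)
      = qp q ((h1 + h2 + h3 + l1 + l2 + l3) / 2 + β / 2) := col _ _
  have eD : qp q ((h1 + h2 + h3 + l1 + l2 + l3) / 2) * qp q (-β / 2)
      = qp q ((h1 + h2 + h3 + l1 + l2 + l3) / 2 + -β / 2) := col _ _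
  rcases hlam with h | h
  · have r1 : h1 + h2 + h3 + 3/2 - lam = (h1 + h2 + h3 + l1 + l2 + l3) / 2 + β / 2 := by
      rw [h]; ring
    have r2 : l1 + l2 + l3 - 3/2 + lam = (h1 + h2 + h3 + l1 + l2 + l3) / 2 + -β / 2 := by
      rw [h]; ring
    have EA := eA.trans (by rw [r1])
    have EB := eB.trans (by rw [r2])
    linear_combination t1 * t2 * t3 * eC + t1 * t2 * t3 * eD - t1 * t2 * t3 * EA - t1 * t2 * t3 * EB
  · have r1 : h1 + h2 + h3 + 3/2 - lam = (h1 + h2 + h3 + l1 + l2 + l3) / 2 + -β / 2 := by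
      rw [h]; ring
    have r2 : l1 + l2 + l3 - 3/2 + lam = (h1 + h2 + h3 + l1 + l2 + l3) / 2 + β / 2 := by
      rw [h]; ring
    have EA := eA.trans (by rw [r1])
    have EB := eB.trans (by rw [r2])
    linear_combination t1 * t2 * t3 * eC + t1 * t2 * t3 * eD - t1 * t2 * t3 * EA - t1 * t2 * t3 * EB

lemma coeff_match {c u v : ℂ} {P : Prop} [Decidable P] (h1 : P → u = v) (h0 : ¬ P → c = 0) :
    c * u = (if P then c else 0) * v := by
  split_ifs with h
  · rw [h1 h]
  · rw [h0 h, zero_mul, zero_mul]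
theorem stmt12 (q h1 h2 h3 l1 l2 l3 β : ℝ) (hq : 0 < q) (hq1 : q ≠ 1)
    (t1 t2 t3 : ℂ) (ht1 : t1 ≠ 0) (ht2 : t2 ≠ 0) (ht3 : t3 ≠ 0)
    (lam : ℝ)
    (hlam : lam = (h1 + h2 + h3 - l1 - l2 - l3 - β + 3) / 2 ∨
      lam = (h1 + h2 + h3 - l1 - l2 - l3 + β + 3) / 2)
    (n : ℕ) (hn : (n : ℝ) = -lam + 1/2)
    (V : Submodule ℂ (ℝ → ℂ))
    (hV : V = Submodule.span ℂ
      {f : ℝ → ℂ | ∃ k : ℕ, k ≤ n ∧ f = fun x : ℝ => ((x ^ (lam + (k : ℝ)) : ℝ) : ℂ)})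
    (g : ℝ → ℂ) (hg : g ∈ V) :
    ∃ f ∈ V, ∀ x : ℝ, 0 < x → A3 q h1 h2 h3 l1 l2 l3 β t1 t2 t3 g x = f x := by
  subst hV
  induction hg using Submodule.span_induction with
  | mem g hgmem =>
    obtain ⟨k, hk, rfl⟩ := hgmem
    refine ⟨(if k + 2 ≤ n then
        (qp q (-(lam + (k:ℝ))) + qp q (lam + (k:ℝ)) - qp q (1/2) - qp q (-(1/2))) else 0)
        • (fun x : ℝ => ((x ^ (lam + ((k+2 : ℕ) : ℝ)) : ℝ) : ℂ))
      + (if k + 1 ≤ n then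
          (((qp q h1 + qp q l1) * t1 + (qp q h2 + qp q l2) * t2 + (qp q h3 + qp q l3) * t3)
          - (qp q (h1 + 1/2) * t1 + qp q (h2 + 1/2) * t2 + qp q (h3 + 1/2) * t3)
              * qp q (-(lam + (k:ℝ)))
          - (qp q (l1 - 1/2) * t1 + qp q (l2 - 1/2) * t2 + qp q (l3 - 1/2) * t3)
              * qp q (lam + (k:ℝ))) else 0)
        • (fun x : ℝ => ((x ^ (lam + ((k+1 : ℕ) : ℝ)) : ℝ) : ℂ))
      + ((qp q (h1 + 1/2) * qp q (h2 + 1/2) * t1 * t2 + qp q (h1 + 1/2) * qp q (h3 + 1/2) * t1 * t3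
            + qp q (h2 + 1/2) * qp q (h3 + 1/2) * t2 * t3) * qp q (-(lam + (k:ℝ)))
          + (qp q (l1 - 1/2) * qp q (l2 - 1/2) * t1 * t2 + qp q (l1 - 1/2) * qp q (l3 - 1/2) * t1 * t3
            + qp q (l2 - 1/2) * qp q (l3 - 1/2) * t2 * t3) * qp q (lam + (k:ℝ)))
        • (fun x : ℝ => ((x ^ (lam + (k : ℝ)) : ℝ) : ℂ))
      + (if 1 ≤ k then
          (qp q ((h1 + h2 + h3 + l1 + l2 + l3) / 2) * (qp q (β / 2) + qp q (-β / 2)) * t1 * t2 * t3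
          - qp q (h1 + 1/2) * qp q (h2 + 1/2) * qp q (h3 + 1/2) * t1 * t2 * t3
              * qp q (-(lam + (k:ℝ)))
          - qp q (l1 - 1/2) * qp q (l2 - 1/2) * qp q (l3 - 1/2) * t1 * t2 * t3
              * qp q (lam + (k:ℝ))) else 0)
        • (fun x : ℝ => ((x ^ (lam + ((k-1 : ℕ) : ℝ)) : ℝ) : ℂ)), ?_, ?_⟩
    · have hM : ∀ j : ℕ, j ≤ n →
          (fun x : ℝ => ((x ^ (lam + (j : ℝ)) : ℝ) : ℂ)) ∈ Submodule.span ℂ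
            {f : ℝ → ℂ | ∃ k : ℕ, k ≤ n ∧ f = fun x : ℝ => ((x ^ (lam + (k : ℝ)) : ℝ) : ℂ)} :=
        fun j hj => Submodule.subset_span ⟨j, hj, rfl⟩
      refine add_mem (add_mem (add_mem ?_ ?_) ?_) ?_
      · split_ifs with h
        · exact Submodule.smul_mem _ _ (hM _ h)
        · rw [zero_smul]; exact zero_mem _
      · split_ifs with h
        · exact Submodule.smul_mem _ _ (hM _ h)
        · rw [zero_smul]; exact zero_mem _
      · exact Submodule.smul_mem _ _ (hM _ hk)
      · split_ifs with h
        · exact Submodule.smul_mem _ _ (hM _ (le_trans (Nat.sub_le k 1) hk))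
        · rw [zero_smul]; exact zero_mem _
    · intro x hx
      rw [A3_mono q h1 h2 h3 l1 l2 l3 β hq t1 t2 t3 (lam + (k:ℝ)) x hx]
      simp only [Pi.add_apply, Pi.smul_apply, smul_eq_mul]
      have key2 : ¬ (k + 2 ≤ n) →
          qp q (-(lam + (k:ℝ))) + qp q (lam + (k:ℝ)) - qp q (1/2) - qp q (-(1/2)) = 0 := by
        intro h
        apply Z2
        rcases (by omega : k = n ∨ k + 1 = n) with h' | h'
        · left
          have hc : (k:ℝ) = (n:ℝ) := by exact_mod_cast congrArg (Nat.cast : ℕ → ℝ) h'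
          linarith
        · right
          have hc : (k:ℝ) + 1 = (n:ℝ) := by exact_mod_cast congrArg (Nat.cast : ℕ → ℝ) h'
          linarith
      have hμ1 : ¬ (k + 1 ≤ n) → lam + (k:ℝ) = 1/2 := by
        intro h
        have h' : k = n := by omega
        have hc : (k:ℝ) = (n:ℝ) := by exact_mod_cast congrArg (Nat.cast : ℕ → ℝ) h'
        linarith
      have keym : k = 0 →
          qp q ((h1 + h2 + h3 + l1 + l2 + l3) / 2) * (qp q (β / 2) + qp q (-β / 2)) * t1 * t2 * t3
          - qp q (h1 + 1/2) * qp q (h2 + 1/2) * qp q (h3 + 1/2) * t1 * t2 * t3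
              * qp q (-(lam + (k:ℝ)))
          - qp q (l1 - 1/2) * qp q (l2 - 1/2) * qp q (l3 - 1/2) * t1 * t2 * t3
              * qp q (lam + (k:ℝ)) = 0 := by
        intro h
        subst h
        simp only [Nat.cast_zero, add_zero]
        exact Zm q h1 h2 h3 l1 l2 l3 β lam hq t1 t2 t3 hlam
      congr 1
      · congr 1
        · congr 1
          · exact coeff_match
              (fun _ => by
                rw [show lam + ((k+2 : ℕ) : ℝ) = lam + (k:ℝ) + 2 from by push_cast; ring])
              key2
          · exact coeff_match
              (fun _ => by
                rw [show lam + ((k+1 : ℕ) : ℝ) = lam + (k:ℝ) + 1 from by push_cast; ring])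
              (fun h => by rw [hμ1 h]; exact Z1 q h1 h2 h3 l1 l2 l3 hq t1 t2 t3)
      · exact coeff_match
          (fun h => by
            rw [show lam + ((k-1 : ℕ) : ℝ) = lam + (k:ℝ) - 1 from by
              rw [Nat.cast_sub h]; push_cast; ring])
          (fun h => keym (by omega))
  | zero => exact ⟨0, zero_mem _, fun x hx => by simp [A3]⟩
  | add g1 g2 hg1 hg2 ih1 ih2 =>
    obtain ⟨f1, hf1, he1⟩ := ih1
    obtain ⟨f2, hf2, he2⟩ := ih2
    refine ⟨f1 + f2, add_mem hf1 hf2, fun x hx => ?_⟩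
    have h : A3 q h1 h2 h3 l1 l2 l3 β t1 t2 t3 (g1 + g2) x
        = A3 q h1 h2 h3 l1 l2 l3 β t1 t2 t3 g1 x + A3 q h1 h2 h3 l1 l2 l3 β t1 t2 t3 g2 x := by
      simp only [A3, Pi.add_apply]; ring
    rw [h, he1 x hx, he2 x hx]; rfl
  | smul c g hg ih =>
    obtain ⟨f, hf, he⟩ := ih
    refine ⟨c • f, Submodule.smul_mem _ _ hf, fun x hx => ?_⟩
    have h : A3 q h1 h2 h3 l1 l2 l3 β t1 t2 t3 (c • g) x
        = c * A3 q h1 h2 h3 l1 l2 l3 β t1 t2 t3 g x := by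
      simp only [A3, Pi.smul_apply, smul_eq_mul]; ring
    rw [h, he x hx]; rfl
end
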